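/- On ℝ^4 with canonical coordinates (x, y, p_x, p_y) with x > 0 and y > 1, the Hamiltonian H1 = p_x p_y + α/x^2 + β/(x^{3/2}√(y−1)) + γ/(x^{1/2}√(y−1)) Poisson-commutes with H2 = (x p_x − p_y − p_y y)(x p_x + p_y − p_y y) − 4α y/x − 2β(2y−1)/(x^{1/2}√(y−1)) − 2γ x^{1/2}/√(y−1), i.e. {H1, H2} = 0. -/

import Mathlib

/-- Canonical Poisson bracket on ℝ⁴ with coordinates (x, y, px, py). -/
noncomputable def pb (f g : ℝ → ℝ → ℝ → ℝ → ℝ) (x y px py : ℝ) : ℝ :=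
    deriv (fun t => f t y px py) x * deriv (fun t => g x y t py) px
  + deriv (fun t => f x t px py) y * deriv (fun t => g x y px t) py
  - deriv (fun t => f x y t py) px * deriv (fun t => g t y px py) x
  - deriv (fun t => f x y px t) py * deriv (fun t => g x t px py) y

set_option maxHeartbeats 2000000 in
theorem stmt12 (α β γ : ℝ) :
    ∀ x y px py : ℝ, 0 < x → 1 < y →
      pb (fun x y px py => px * py + α / x ^ 2
            + β / (x ^ ((3:ℝ)/2) * Real.sqrt (y - 1))
            + γ / (x ^ ((1:ℝ)/2) * Real.sqrt (y - 1)))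
         (fun x y px py => (x * px - py - py * y) * (x * px + py - py * y)
            - 4 * α * y / x - 2 * β * (2 * y - 1) / (x ^ ((1:ℝ)/2) * Real.sqrt (y - 1))
            - 2 * γ * x ^ ((1:ℝ)/2) / Real.sqrt (y - 1)) x y px py = 0 := by
  intro x y px py hx hy
  have hy1 : (0:ℝ) < y - 1 := by linarith
  obtain ⟨s, hs_def⟩ : ∃ s', Real.sqrt (y - 1) = s' := ⟨_, rfl⟩
  obtain ⟨u, hu_def⟩ : ∃ u', x ^ ((1:ℝ)/2) = u' := ⟨_, rfl⟩
  have hs : 0 < s := hs_def ▸ Real.sqrt_pos.mpr hy1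
  have hu : 0 < u := hu_def ▸ Real.rpow_pos_of_pos hx _
  have hu2 : u * u = x := by
    rw [← hu_def, ← Real.rpow_add hx]; norm_num
  have hs2 : s * s = y - 1 := by rw [← hs_def]; exact Real.mul_self_sqrt hy1.le
  have hy' : y = s * s + 1 := by linarith
  have h32 : x ^ ((3:ℝ)/2) = x * u := by
    rw [← hu_def, show (3:ℝ)/2 = 1 + 1/2 by norm_num, Real.rpow_add hx, Real.rpow_one]
  have hxne : x ≠ 0 := hx.ne'
  have hune : u ≠ 0 := hu.ne'
  have hsne : s ≠ 0 := hs.ne'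
  -- derivative of t ↦ t ^ (1/2)
  have hrhalf : HasDerivAt (fun z : ℝ => z ^ ((1:ℝ)/2)) (1 / (2 * u)) x := by
    have h := Real.hasDerivAt_rpow_const (x := x) (p := (1:ℝ)/2) (Or.inl hxne)
    convert h using 1
    rw [show (1:ℝ)/2 - 1 = -(1/2) by norm_num, Real.rpow_neg hx.le, hu_def]
    field_simp
  -- derivative of t ↦ sqrt (t - 1)
  have hsq : HasDerivAt (fun t : ℝ => Real.sqrt (t - 1)) (1 / (2 * s)) y := by
    have h1 : HasDerivAt (fun t : ℝ => t - 1) 1 y := (hasDerivAt_id y).sub_const 1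
    have h2 := (Real.hasDerivAt_sqrt hy1.ne').comp y h1
    simpa [hs_def, Function.comp_def] using h2
  have hne1 : x ^ ((3:ℝ)/2) * s ≠ 0 := by
    rw [h32]; exact mul_ne_zero (mul_ne_zero hxne hune) hsne
  have hne2 : x ^ ((1:ℝ)/2) * s ≠ 0 := by
    rw [hu_def]; exact mul_ne_zero hune hsne
  -- H1 partial derivatives
  have h1x : HasDerivAt (fun t => px * py + α / t ^ 2
        + β / (t ^ ((3:ℝ)/2) * s) + γ / (t ^ ((1:ℝ)/2) * s))
      (-(2*α)/x^3 - 3*β/(2*x^2*u*s) - γ/(2*x*u*s)) x := by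
    have hp2 : HasDerivAt (fun t : ℝ => t ^ 2) (2 * x) x := by
      simpa using hasDerivAt_pow 2 x
    have h32' : HasDerivAt (fun t : ℝ => t ^ ((3:ℝ)/2)) ((3/2) * u) x := by
      have h := Real.hasDerivAt_rpow_const (x := x) (p := (3:ℝ)/2) (Or.inl hxne)
      convert h using 1
      rw [show (3:ℝ)/2 - 1 = 1/2 by norm_num, hu_def]
    have hA := (hasDerivAt_const x α).fun_div hp2 (pow_ne_zero 2 hxne)
    have hB := (hasDerivAt_const x β).fun_div (h32'.mul_const s) hne1
    have hC := (hasDerivAt_const x γ).fun_div (hrhalf.mul_const s) hne2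
    have h := (((hasDerivAt_const x (px * py)).fun_add hA).fun_add hB).fun_add hC
    refine h.congr_deriv ?_
    simp only [h32, hu_def]
    simp only [← hu2]
    field_simp
    ring
  have h1y : HasDerivAt (fun t => px * py + α / x ^ 2
        + β / (x ^ ((3:ℝ)/2) * Real.sqrt (t - 1)) + γ / (x ^ ((1:ℝ)/2) * Real.sqrt (t - 1)))
      (-β/(2*x*u*s^3) - γ/(2*u*s^3)) y := by
    have hB := (hasDerivAt_const y β).fun_div ((hasDerivAt_const y (x ^ ((3:ℝ)/2))).fun_mul hsq)
      (by rw [hs_def]; exact hne1)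
    have hC := (hasDerivAt_const y γ).fun_div ((hasDerivAt_const y (x ^ ((1:ℝ)/2))).fun_mul hsq)
      (by rw [hs_def]; exact hne2)
    have h := ((hasDerivAt_const y (px * py + α / x ^ 2)).fun_add hB).fun_add hC
    have h' : HasDerivAt (fun t => px * py + α / x ^ 2
        + β / (x ^ ((3:ℝ)/2) * Real.sqrt (t - 1)) + γ / (x ^ ((1:ℝ)/2) * Real.sqrt (t - 1)))
      (0 + (0 * (x ^ ((3:ℝ)/2) * Real.sqrt (y-1))
            - β * (0 * Real.sqrt (y-1) + x ^ ((3:ℝ)/2) * (1/(2*s)))) / (x ^ ((3:ℝ)/2) * Real.sqrt (y-1))^2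
         + (0 * (x ^ ((1:ℝ)/2) * Real.sqrt (y-1))
            - γ * (0 * Real.sqrt (y-1) + x ^ ((1:ℝ)/2) * (1/(2*s)))) / (x ^ ((1:ℝ)/2) * Real.sqrt (y-1))^2) y := by
      simpa [add_assoc] using h
    convert h' using 1
    simp only [hs_def, h32, hu_def]
    simp only [← hu2]
    field_simp
    ring
  have h1px : HasDerivAt (fun t => t * py + α / x ^ 2
        + β / (x ^ ((3:ℝ)/2) * s) + γ / (x ^ ((1:ℝ)/2) * s)) py px := by
    have h := ((((hasDerivAt_id px).mul_const py).add_const (α / x ^ 2)).add_const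
      (β / (x ^ ((3:ℝ)/2) * s))).add_const (γ / (x ^ ((1:ℝ)/2) * s))
    simpa [add_assoc] using h
  have h1py : HasDerivAt (fun t => px * t + α / x ^ 2
        + β / (x ^ ((3:ℝ)/2) * s) + γ / (x ^ ((1:ℝ)/2) * s)) px py := by
    have h := (((hasDerivAt_id py).const_mul px).add_const (α / x ^ 2)).add_const
      (β / (x ^ ((3:ℝ)/2) * s)) |>.add_const (γ / (x ^ ((1:ℝ)/2) * s))
    simpa [add_assoc] using h
  -- H2 partial derivatives
  have h2x : HasDerivAt (fun t => (t * px - py - py * y) * (t * px + py - py * y)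
        - 4 * α * y / t - 2 * β * (2 * y - 1) / (t ^ ((1:ℝ)/2) * s)
        - 2 * γ * t ^ ((1:ℝ)/2) / s)
      (px * (x * px + py - py * y) + (x * px - py - py * y) * px
        + 4 * α * y / x ^ 2 + β * (2*y-1) / (x * u * s) - γ / (u * s)) x := by
    have hq : HasDerivAt (fun t : ℝ => (t * px - py - py * y) * (t * px + py - py * y))
        (px * (x * px + py - py * y) + (x * px - py - py * y) * px) x := by
      have hl : HasDerivAt (fun t : ℝ => t * px - py - py * y) px x := by
        simpa using (((hasDerivAt_id x).mul_const px).sub_const py).sub_const (py * y)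
      have hr : HasDerivAt (fun t : ℝ => t * px + py - py * y) px x := by
        simpa using (((hasDerivAt_id x).mul_const px).add_const py).sub_const (py * y)
      simpa using hl.fun_mul hr
    have hA := (hasDerivAt_const x (4 * α * y)).fun_div (hasDerivAt_id x) hxne
    have hB := (hasDerivAt_const x (2 * β * (2 * y - 1))).fun_div (hrhalf.mul_const s) hne2
    have hC := (hrhalf.const_mul (2 * γ)).div_const s
    have h := ((hq.fun_sub hA).fun_sub hB).fun_sub hC
    refine h.congr_deriv ?_
    simp only [hu_def, id_eq]
    simp only [← hu2]
    field_simp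
    ring
  have h2y : HasDerivAt (fun t => (x * px - py - py * t) * (x * px + py - py * t)
        - 4 * α * t / x - 2 * β * (2 * t - 1) / (x ^ ((1:ℝ)/2) * Real.sqrt (t - 1))
        - 2 * γ * x ^ ((1:ℝ)/2) / Real.sqrt (t - 1))
      ((-py) * (x * px + py - py * y) + (x * px - py - py * y) * (-py)
        - 4 * α / x - 4 * β / (u * s) + β * (2*y-1) / (u * s^3) + γ * u / s^3) y := by
    have hq : HasDerivAt (fun t : ℝ => (x * px - py - py * t) * (x * px + py - py * t))
        ((-py) * (x * px + py - py * y) + (x * px - py - py * y) * (-py)) y := by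
      have hl : HasDerivAt (fun t : ℝ => x * px - py - py * t) (-py) y := by
        simpa using (hasDerivAt_const y (x * px - py)).fun_sub ((hasDerivAt_id y).const_mul py)
      have hr : HasDerivAt (fun t : ℝ => x * px + py - py * t) (-py) y := by
        simpa using (hasDerivAt_const y (x * px + py)).fun_sub ((hasDerivAt_id y).const_mul py)
      simpa using hl.fun_mul hr
    have hA : HasDerivAt (fun t : ℝ => 4 * α * t / x) (4 * α / x) y := by
      have := ((hasDerivAt_id y).const_mul (4 * α)).div_const x
      simpa using this
    have hBnum : HasDerivAt (fun t : ℝ => 2 * β * (2 * t - 1)) (4 * β) y := by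
      have := (((hasDerivAt_id y).const_mul 2).sub_const 1).const_mul (2 * β)
      refine this.congr_deriv ?_; ring
    have hBden : HasDerivAt (fun t : ℝ => x ^ ((1:ℝ)/2) * Real.sqrt (t - 1))
        (x ^ ((1:ℝ)/2) * (1 / (2 * s))) y := by
      simpa using (hasDerivAt_const y (x ^ ((1:ℝ)/2))).fun_mul hsq
    have hB := hBnum.fun_div hBden (by rw [hs_def]; exact hne2)
    have hC := (hasDerivAt_const y (2 * γ * x ^ ((1:ℝ)/2))).fun_div hsq
      (by rw [hs_def]; exact hsne)
    have h := ((hq.fun_sub hA).fun_sub hB).fun_sub hC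
    refine h.congr_deriv ?_
    simp only [hs_def, hu_def]
    simp only [← hu2, hy']
    field_simp
    ring
  have h2px : HasDerivAt (fun t => (x * t - py - py * y) * (x * t + py - py * y)
        - 4 * α * y / x - 2 * β * (2 * y - 1) / (x ^ ((1:ℝ)/2) * s)
        - 2 * γ * x ^ ((1:ℝ)/2) / s)
      (x * (x * px + py - py * y) + (x * px - py - py * y) * x) px := by
    have hl : HasDerivAt (fun t : ℝ => x * t - py - py * y) x px := by
      simpa using (((hasDerivAt_id px).const_mul x).sub_const py).sub_const (py * y)
    have hr : HasDerivAt (fun t : ℝ => x * t + py - py * y) x px := by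
      simpa using (((hasDerivAt_id px).const_mul x).add_const py).sub_const (py * y)
    have h := (((hl.fun_mul hr).sub_const (4 * α * y / x)).sub_const
      (2 * β * (2 * y - 1) / (x ^ ((1:ℝ)/2) * s))).sub_const (2 * γ * x ^ ((1:ℝ)/2) / s)
    convert h using 1 <;> ring_nf
  have h2py : HasDerivAt (fun t => (x * px - t - t * y) * (x * px + t - t * y)
        - 4 * α * y / x - 2 * β * (2 * y - 1) / (x ^ ((1:ℝ)/2) * s)
        - 2 * γ * x ^ ((1:ℝ)/2) / s)
      ((-1 - y) * (x * px + py - py * y) + (x * px - py - py * y) * (1 - y)) py := by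
    have hl : HasDerivAt (fun t : ℝ => x * px - t - t * y) (-1 - y) py := by
      have := ((hasDerivAt_const py (x * px)).fun_sub (hasDerivAt_id py)).fun_sub
        ((hasDerivAt_id py).mul_const y)
      simpa using this
    have hr : HasDerivAt (fun t : ℝ => x * px + t - t * y) (1 - y) py := by
      have := ((hasDerivAt_const py (x * px)).fun_add (hasDerivAt_id py)).fun_sub
        ((hasDerivAt_id py).mul_const y)
      simpa using this
    have h := (((hl.fun_mul hr).sub_const (4 * α * y / x)).sub_const
      (2 * β * (2 * y - 1) / (x ^ ((1:ℝ)/2) * s))).sub_const (2 * γ * x ^ ((1:ℝ)/2) / s)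
    convert h using 1 <;> ring_nf
  -- assemble
  rw [pb]
  rw [hs_def]
  rw [h1x.deriv, h1y.deriv, h1px.deriv, h1py.deriv, h2x.deriv, h2y.deriv,
    h2px.deriv, h2py.deriv]
  simp only [← hu2, hy']
  field_simp
  ring
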